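/- arXiv:2311.09512 — 2 statements merged into one kernel-verified Lean document; each statement's English description precedes it below -/
import Mathlib

section
/- Let S = ((X,d), (f_i)_{i∈{1,…,n}}) be an iterated function system with n ≥ 2, where each f_i satisfies d(f_i(x), f_i(y)) ≤ c_i·d(x,y) for all x,y ∈ X with c_i ∈ [0,1). Let γ_i denote the unique fixed point of f_i and M = max_{i,j∈{1,…,n}} d(γ_i, γ_j). If ρ_1, …, ρ_n are nonnegative reals satisfying ρ_i = c_i·(M + max_{j∈{1,…,n}\{i}} ρ_j) for every i ∈ {1,…,n}, then the attractor A_S of S is contained in the union ⋃_{i∈{1,…,n}} B[γ_i, ρ_i] of the closed balls B[γ_i, ρ_i] = {x ∈ X : d(x, γ_i) ≤ ρ_i}. -/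
/-- If `S = ((X,d), (f_i)_{i ∈ {1,…,n}})` is an IFS with `n ≥ 2`, each `f_i` satisfying
`d(f_i x, f_i y) ≤ c_i · d(x,y)` with `c_i ∈ [0,1)`, `γ_i` is the fixed point of `f_i`,
`M = max_{i,j} d(γ_i, γ_j)`, and the nonnegative reals `ρ_1, …, ρ_n` satisfy
`ρ_i = c_i (M + max_{j ≠ i} ρ_j)` for every `i`, then the attractor `A` of `S`
(the nonempty compact set with `A = ⋃ i, f_i(A)`) is contained in `⋃ i, B[γ_i, ρ_i]`. -/
theorem attractor_subset_union_closedBalls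
    {X : Type*} [MetricSpace X] [CompleteSpace X]
    {n : ℕ} (hn : 2 ≤ n)
    (f : Fin n → X → X) (c : Fin n → ℝ)
    (hc0 : ∀ i, 0 ≤ c i) (hc1 : ∀ i, c i < 1)
    (hlip : ∀ i, ∀ x y : X, dist (f i x) (f i y) ≤ c i * dist x y)
    (γ : Fin n → X) (hγ : ∀ i, f i (γ i) = γ i)
    (M : ℝ)
    (hM : M = Finset.univ.sup'
      ⟨(⟨0, by omega⟩, ⟨0, by omega⟩), Finset.mem_univ _⟩
      (fun p : Fin n × Fin n => dist (γ p.1) (γ p.2)))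
    (ρ : Fin n → ℝ) (hρ0 : ∀ i, 0 ≤ ρ i)
    (heq : ∀ i, ρ i = c i * (M + (Finset.univ.erase i).sup'
      (Finset.card_pos.mp (by
        rw [Finset.card_erase_of_mem (Finset.mem_univ i), Finset.card_univ,
          Fintype.card_fin]
        omega)) ρ))
    (A : Set X) (hA : IsCompact A) (hAne : A.Nonempty)
    (hself : A = ⋃ i, f i '' A) :
    A ⊆ ⋃ i, Metric.closedBall (γ i) (ρ i) := by
  have i0 : Fin n := ⟨0, by omega⟩
  set φ : X → ℝ := fun x => Finset.univ.inf' ⟨i0, Finset.mem_univ _⟩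
    (fun i => dist x (γ i) - ρ i) with hφ
  have hφcont : Continuous φ := by
    rw [hφ]
    exact Continuous.finset_inf'_apply ⟨i0, Finset.mem_univ _⟩
      (fun i _ => (continuous_id.dist continuous_const).sub continuous_const)
  obtain ⟨x0, hx0A, hx0max⟩ := hA.exists_isMaxOn hAne hφcont.continuousOn
  set t := φ x0 with ht
  have key : t ≤ 0 := by
    by_contra h
    push_neg at h
    -- x0 = f i a for some i, a ∈ A
    have : x0 ∈ ⋃ i, f i '' A := hself ▸ hx0A
    obtain ⟨i, a, haA, hfa⟩ := Set.mem_iUnion.mp this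
    obtain ⟨j, -, hj⟩ := Finset.exists_mem_eq_inf' (⟨i0, Finset.mem_univ _⟩)
      (fun k => dist a (γ k) - ρ k)
    have hφa : φ a = dist a (γ j) - ρ j := hj
    have hφat : φ a ≤ t := hx0max haA
    have hbound : dist x0 (γ i) ≤ ρ i + c i * φ a := by
      have h1 : dist x0 (γ i) ≤ c i * dist a (γ i) := by
        have := hlip i a (γ i)
        rwa [hfa, hγ i] at this
      by_cases hij : j = i
      · -- case j = i : c i * (φ a + ρ i) ≤ ρ i + c i * φ a
        subst hij
        have : dist a (γ j) = φ a + ρ j := by rw [hφa]; ring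
        rw [this] at h1
        nlinarith [hc0 j, hc1 j, hρ0 j]
      · have hdγ : dist (γ j) (γ i) ≤ M := by
          rw [hM]
          exact Finset.le_sup' (fun p : Fin n × Fin n => dist (γ p.1) (γ p.2))
            (Finset.mem_univ (j, i))
        have hρj : ρ j ≤ (Finset.univ.erase i).sup'
            (Finset.card_pos.mp (by
              rw [Finset.card_erase_of_mem (Finset.mem_univ i), Finset.card_univ,
                Fintype.card_fin]
              omega)) ρ :=
          Finset.le_sup' ρ (Finset.mem_erase.mpr ⟨hij, Finset.mem_univ _⟩)
        have h2 : dist a (γ i) ≤ dist a (γ j) + dist (γ j) (γ i) := dist_triangle _ _ _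
        have h3 : dist a (γ j) = φ a + ρ j := by rw [hφa]; ring
        have h4 := heq i
        nlinarith [hc0 i]
    have h5 : t ≤ dist x0 (γ i) - ρ i :=
      Finset.inf'_le (fun k => dist x0 (γ k) - ρ k) (Finset.mem_univ i)
    have h6 : c i * φ a ≤ c i * t := mul_le_mul_of_nonneg_left hφat (hc0 i)
    nlinarith [hc1 i]
  intro x hxA
  have hx : φ x ≤ 0 := le_trans (hx0max hxA) key
  obtain ⟨k, -, hk⟩ := Finset.exists_mem_eq_inf' (⟨i0, Finset.mem_univ _⟩)
    (fun k => dist x (γ k) - ρ k)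
  refine Set.mem_iUnion.mpr ⟨k, ?_⟩
  simp only [Metric.mem_closedBall]
  have : φ x = dist x (γ k) - ρ k := hk
  linarith [this ▸ hx]
end

section
/- Let I = [a,b], J = [c,d] with a < b and c < d, let δ = max{|a|, |b|, |c|, |d|}, let θ > 0, and equip I × J × ℝ with the metric ρ((x,y,z),(x',y',z')) = |x−x'| + |y−y'| + θ|z−z'|. Let F : I × J × ℝ → ℝ³ be given by F(x,y,z) = (a₁x + b₁, c₁y + d₁, e·x + f·y + g·z + α·xy + β) with a₁, c₁ ≥ 0, g ≥ 0 and e, f, α, β, b₁, d₁ ∈ ℝ. Then for all (x,y,z), (x',y',z') ∈ I × J × ℝ, ρ(F(x,y,z), F(x',y',z')) ≤ C · ρ((x,y,z),(x',y',z')), where C = max{ a₁ + θ(|e| + δ|α|), c₁ + θ(|f| + δ|α|), g }. -/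
/-- Let `I = [a,b]`, `J = [c,d]`, `δ = max{|a|,|b|,|c|,|d|}`, `θ > 0`, and let
`F(x,y,z) = (a₁x + b₁, c₁y + d₁, ex + fy + gz + αxy + β)` with `a₁, c₁, g ≥ 0`.
Then, with respect to `ρ((x,y,z),(x',y',z')) = |x−x'| + |y−y'| + θ|z−z'|`,
`ρ(F(x,y,z), F(x',y',z')) ≤ C ρ((x,y,z),(x',y',z'))` for all points of `I × J × ℝ`,
where `C = max{a₁ + θ(|e| + δ|α|), c₁ + θ(|f| + δ|α|), g}`. -/
theorem F_contraction_estimate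
    (a b c d θ : ℝ) (hab : a < b) (hcd : c < d) (hθ : 0 < θ)
    (a₁ b₁ c₁ d₁ e f g α β : ℝ)
    (ha₁ : 0 ≤ a₁) (hc₁ : 0 ≤ c₁) (hg : 0 ≤ g)
    (δ : ℝ) (hδ : δ = max (max |a| |b|) (max |c| |d|))
    (C : ℝ)
    (hC : C = max (max (a₁ + θ * (|e| + δ * |α|)) (c₁ + θ * (|f| + δ * |α|))) g) :
    ∀ x x' y y' z z' : ℝ,
      x ∈ Set.Icc a b → x' ∈ Set.Icc a b → y ∈ Set.Icc c d → y' ∈ Set.Icc c d →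
      |(a₁ * x + b₁) - (a₁ * x' + b₁)| + |(c₁ * y + d₁) - (c₁ * y' + d₁)|
        + θ * |(e * x + f * y + g * z + α * (x * y) + β)
            - (e * x' + f * y' + g * z' + α * (x' * y') + β)|
      ≤ C * (|x - x'| + |y - y'| + θ * |z - z'|) := by
  intro x x' y y' z z' hx hx' hy hy'
  -- |x| ≤ δ and |y'| ≤ δ
  have hxδ : |x| ≤ δ := by
    rw [hδ]; exact le_max_of_le_left (abs_le_max_abs_abs hx.1 hx.2)
  have hyδ : |y'| ≤ δ := by
    rw [hδ]; exact le_max_of_le_right (abs_le_max_abs_abs hy'.1 hy'.2)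
  have hδ0 : 0 ≤ δ := le_trans (abs_nonneg x) hxδ
  -- key product bound
  have hprod : |x * y - x' * y'| ≤ δ * |y - y'| + δ * |x - x'| := by
    have h1 : x * y - x' * y' = x * (y - y') + y' * (x - x') := by ring
    calc |x * y - x' * y'| = |x * (y - y') + y' * (x - x')| := by rw [h1]
      _ ≤ |x * (y - y')| + |y' * (x - x')| := abs_add_le _ _
      _ = |x| * |y - y'| + |y'| * |x - x'| := by rw [abs_mul, abs_mul]
      _ ≤ δ * |y - y'| + δ * |x - x'| := by
          gcongr
  -- bound the third component
  have h3 : |(e * x + f * y + g * z + α * (x * y) + β)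
            - (e * x' + f * y' + g * z' + α * (x' * y') + β)|
      ≤ |e| * |x - x'| + |f| * |y - y'| + g * |z - z'| + |α| * (δ * |y - y'| + δ * |x - x'|) := by
    have heq : (e * x + f * y + g * z + α * (x * y) + β)
            - (e * x' + f * y' + g * z' + α * (x' * y') + β)
        = e * (x - x') + f * (y - y') + g * (z - z') + α * (x * y - x' * y') := by ring
    rw [heq]
    calc |e * (x - x') + f * (y - y') + g * (z - z') + α * (x * y - x' * y')|
        ≤ |e * (x - x') + f * (y - y') + g * (z - z')| + |α * (x * y - x' * y')| := abs_add_le _ _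
      _ ≤ (|e * (x - x') + f * (y - y')| + |g * (z - z')|) + |α * (x * y - x' * y')| := by
          gcongr; exact abs_add_le _ _
      _ ≤ ((|e * (x - x')| + |f * (y - y')|) + |g * (z - z')|) + |α * (x * y - x' * y')| := by
          gcongr; exact abs_add_le _ _
      _ = |e| * |x - x'| + |f| * |y - y'| + |g| * |z - z'| + |α| * |x * y - x' * y'| := by
          rw [abs_mul, abs_mul, abs_mul, abs_mul]
      _ ≤ |e| * |x - x'| + |f| * |y - y'| + g * |z - z'| + |α| * (δ * |y - y'| + δ * |x - x'|) := by
          rw [abs_of_nonneg hg]; gcongr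
  have hC1 : a₁ + θ * (|e| + δ * |α|) ≤ C := hC ▸ le_max_of_le_left (le_max_left _ _)
  have hC2 : c₁ + θ * (|f| + δ * |α|) ≤ C := hC ▸ le_max_of_le_left (le_max_right _ _)
  have hC3 : g ≤ C := hC ▸ le_max_right _ _
  have e1 : |(a₁ * x + b₁) - (a₁ * x' + b₁)| = a₁ * |x - x'| := by
    rw [show (a₁ * x + b₁) - (a₁ * x' + b₁) = a₁ * (x - x') by ring, abs_mul, abs_of_nonneg ha₁]
  have e2 : |(c₁ * y + d₁) - (c₁ * y' + d₁)| = c₁ * |y - y'| := by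
    rw [show (c₁ * y + d₁) - (c₁ * y' + d₁) = c₁ * (y - y') by ring, abs_mul, abs_of_nonneg hc₁]
  rw [e1, e2]
  have habs1 : (0:ℝ) ≤ |x - x'| := abs_nonneg _
  have habs2 : (0:ℝ) ≤ |y - y'| := abs_nonneg _
  have habs3 : (0:ℝ) ≤ |z - z'| := abs_nonneg _
  nlinarith [mul_le_mul_of_nonneg_left h3 hθ.le,
    mul_le_mul_of_nonneg_right hC1 habs1,
    mul_le_mul_of_nonneg_right hC2 habs2,
    mul_le_mul_of_nonneg_right (mul_le_mul_of_nonneg_left hC3 hθ.le) habs3]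
end
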